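/- Let R be a commutative Noetherian ring and let M be a finitely generated R-submodule of the total ring of fractions Q(R) containing the image of a non-zero-divisor of R. Then the trace ideal Tr_R(M) equals the set of all x ∈ R such that the multiplication map x·id_M : M → M factors through some finitely generated free R-module (i.e., x·id_M = f ∘ g for some R-linear maps g : M → R^n and f : R^n → M). -/

import Mathlib

universe u

/-- The trace ideal of an `R`-module `M`: the ideal of `R` generated by the images of all
`R`-linear maps `M → R`. -/
noncomputable def traceIdeal (R : Type u) [CommRing R] (M : Type u)
    [AddCommGroup M] [Module R M] : Ideal R :=
  ⨆ f : M →ₗ[R] R, LinearMap.range f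

section Aux

variable {R : Type u} [CommRing R]

/-- Key lemma: every `R`-linear map `f : M → R` for `M ⊆ Q(R)` containing a regular element `r`
satisfies `r * f m = f r * m` in `Q(R)`. -/
lemma trace_key (M : Submodule R (Localization (nonZeroDivisors R)))
    {r : R} (hr : algebraMap R (Localization (nonZeroDivisors R)) r ∈ M)
    (f : ↥M →ₗ[R] R) (m : ↥M) :
    algebraMap R (Localization (nonZeroDivisors R)) r *
      algebraMap R (Localization (nonZeroDivisors R)) (f m) =
    algebraMap R (Localization (nonZeroDivisors R)) (f ⟨_, hr⟩) *
      (m : Localization (nonZeroDivisors R)) := by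
  set Q := Localization (nonZeroDivisors R)
  obtain ⟨⟨a, s⟩, hs⟩ := IsLocalization.surj (nonZeroDivisors R) (m : Q)
  -- hs : (m : Q) * algebraMap R Q s = algebraMap R Q a
  set a' : ↥M := (s : R) • m with ha'def
  have hcoe : (a' : Q) = algebraMap R Q a := by
    rw [ha'def, Submodule.coe_smul, Algebra.smul_def, mul_comm, hs]
  have hab : (a : R) • (⟨_, hr⟩ : ↥M) = r • a' := by
    apply Subtype.ext
    show (a : R) • algebraMap R Q r = r • (a' : Q)
    rw [hcoe, Algebra.smul_def, Algebra.smul_def, ← map_mul, ← map_mul, mul_comm]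
  have hfa : a * f ⟨_, hr⟩ = r * ((s : R) * f m) := by
    have := congrArg f hab
    rw [map_smul, map_smul, smul_eq_mul, smul_eq_mul] at this
    rw [this, ha'def, map_smul, smul_eq_mul]
  have hu : IsUnit (algebraMap R Q (s : R)) := IsLocalization.map_units Q s
  apply hu.mul_right_cancel
  calc algebraMap R Q r * algebraMap R Q (f m) * algebraMap R Q (s : R)
      = algebraMap R Q (r * ((s : R) * f m)) := by rw [← map_mul, ← map_mul]; ring_nf
    _ = algebraMap R Q (f ⟨_, hr⟩) * algebraMap R Q a := by rw [← hfa, map_mul, mul_comm]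
    _ = algebraMap R Q (f ⟨_, hr⟩) * ↑m * algebraMap R Q (s : R) := by
        rw [mul_assoc, ← hs]

end Aux

/-- Let `R` be a commutative Noetherian ring and `M` a finitely generated `R`-submodule of the
total ring of fractions `Q(R)` containing the image of a non-zero-divisor of `R`.  Then the trace
ideal of `M` consists exactly of those `x ∈ R` for which multiplication by `x` on `M` factors
through a finitely generated free `R`-module. -/
theorem trace_eq_factoring_set (R : Type u) [CommRing R] [IsNoetherianRing R]
    (M : Submodule R (Localization (nonZeroDivisors R)))
    (hfg : M.FG)
    (hreg : ∃ r ∈ nonZeroDivisors R,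
      algebraMap R (Localization (nonZeroDivisors R)) r ∈ M) :
    ∀ x : R, x ∈ traceIdeal R ↥M ↔
      ∃ (n : ℕ) (g : ↥M →ₗ[R] (Fin n → R)) (f : (Fin n → R) →ₗ[R] ↥M),
        f ∘ₗ g = x • (LinearMap.id : ↥M →ₗ[R] ↥M) := by
  classical
  set Q := Localization (nonZeroDivisors R)
  obtain ⟨r, hr0, hrM⟩ := hreg
  set r' : ↥M := ⟨algebraMap R Q r, hrM⟩ with hr'def
  have hrunit : IsUnit (algebraMap R Q r) := IsLocalization.map_units Q ⟨r, hr0⟩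
  intro x
  constructor
  · -- forward direction
    intro hx
    rw [traceIdeal, Submodule.mem_iSup_iff_exists_finsupp] at hx
    obtain ⟨d, hd, hsum⟩ := hx
    set T := d.support with hT
    set n := T.card with hn
    set e : Fin n ≃ T := T.equivFin.symm with he
    set F : Fin n → (↥M →ₗ[R] R) := fun i => (e i : ↥M →ₗ[R] R) with hF
    have hchoice : ∀ i : Fin n, ∃ m : ↥M, (F i) m = d (F i) := fun i => hd (F i)
    choose mm hmm using hchoice
    have hxsum : ∑ i : Fin n, d (F i) = x := by
      rw [← hsum, Finsupp.sum]
      rw [← Finset.sum_coe_sort T (fun f => d f)]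
      exact Equiv.sum_comp e (fun t => d (t : ↥M →ₗ[R] R))
    refine ⟨n, LinearMap.pi (fun i => F i),
      ∑ i : Fin n, (LinearMap.proj i : (Fin n → R) →ₗ[R] R).smulRight (mm i), ?_⟩
    ext m
    have hRHS : (((x • (LinearMap.id : ↥M →ₗ[R] ↥M)) m : ↥M) : Q) = x • (m : Q) := by simp
    rw [hRHS]
    apply hrunit.mul_left_cancel
    have hLHS : ((((∑ i : Fin n, (LinearMap.proj i :
        (Fin n → R) →ₗ[R] R).smulRight (mm i)) ∘ₗ LinearMap.pi (fun i => F i)) m : ↥M) : Q)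
        = ∑ i : Fin n, (F i) m • (mm i : Q) := by
      simp [LinearMap.sum_apply]
    rw [LinearMap.comp_apply] at hLHS ⊢
    rw [hLHS]
    have hterm : ∀ i : Fin n, algebraMap R Q r * ((F i) m • (mm i : Q))
        = algebraMap R Q r * (d (F i) • (m : Q)) := by
      intro i
      have h1 := trace_key M hrM (F i) m
      have h2 := trace_key M hrM (F i) (mm i)
      rw [← hmm i]
      rw [Algebra.smul_def, Algebra.smul_def]
      linear_combination (mm i : Q) * h1 - (m : Q) * h2
    rw [Finset.mul_sum]
    simp_rw [hterm]
    rw [← Finset.mul_sum, ← Finset.sum_smul, hxsum]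
  · -- backward direction
    rintro ⟨n, g, f, hfg'⟩
    set h : Fin n → (↥M →ₗ[R] R) := fun i => (LinearMap.proj i).comp g with hh
    set b : Fin n → ↥M := fun i => f (Pi.single i 1) with hb
    have heval : f (g r') = x • r' := by
      have := congrArg (fun φ => φ r') hfg'
      simpa using this
    have hexpand : f (g r') = ∑ i : Fin n, (h i) r' • b i := by
      have h1 : g r' = ∑ i : Fin n, Pi.single i ((g r') i) :=
        (Finset.univ_sum_single (g r')).symm
      rw [h1, map_sum]
      refine Finset.sum_congr rfl fun i _ => ?_
      have : Pi.single i ((g r') i) = ((g r') i) • (Pi.single i 1 : Fin n → R) := by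
        ext j
        by_cases hij : j = i <;> simp [hij, Pi.single_apply]
      rw [this, map_smul]
      rfl
    -- coerce to Q and compute
    have hQ : x • (algebraMap R Q r) = ∑ i : Fin n, algebraMap R Q ((h i) r') * (b i : Q) := by
      have := congrArg (fun m : ↥M => (m : Q)) (hexpand ▸ heval).symm
      simpa [Algebra.smul_def] using this
    have hQ2 : x • (algebraMap R Q r)
        = algebraMap R Q r * algebraMap R Q (∑ i : Fin n, (h i) (b i)) := by
      rw [hQ, map_sum, Finset.mul_sum]
      refine Finset.sum_congr rfl fun i _ => ?_
      exact (trace_key M hrM (h i) (b i)).symm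
    have hinj : Function.Injective (algebraMap R Q) :=
      IsLocalization.injective Q (le_refl (nonZeroDivisors R))
    have hxr : x * r = (∑ i : Fin n, (h i) (b i)) * r := by
      apply hinj
      calc algebraMap R Q (x * r) = x • algebraMap R Q r := by
            rw [map_mul, Algebra.smul_def]
        _ = algebraMap R Q r * algebraMap R Q (∑ i : Fin n, (h i) (b i)) := hQ2
        _ = algebraMap R Q ((∑ i : Fin n, (h i) (b i)) * r) := by rw [map_mul]; ring
    have hx : x = ∑ i : Fin n, (h i) (b i) := by
      have hz : (x - ∑ i : Fin n, (h i) (b i)) * r = 0 := by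
        rw [sub_mul, hxr, sub_self]
      exact sub_eq_zero.mp ((mul_right_mem_nonZeroDivisors_eq_zero_iff hr0).mp hz)
    rw [hx, traceIdeal]
    refine Submodule.sum_mem _ fun i _ => ?_
    exact (le_iSup (fun f : ↥M →ₗ[R] R => LinearMap.range f) (h i))
      (LinearMap.mem_range_self (h i) (b i))
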